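/- Let S = ⋃_{j,l ≥ 1} (l·10^j − j, l·10^j + j) ⊆ ℕ (open integer intervals). Let k ≥ 1, l ≥ 1, and n ≥ 0 satisfy 10^{n−1} < k ≤ 10^n. If m = l·10^k + Σ_{j=0}^{n} 10^j or m = l·10^k − Σ_{j=0}^{n} 10^j, then either m ∉ S, or m ∈ (l₀·10^{j₀} − j₀, l₀·10^{j₀} + j₀) for some j₀ > k and l₀ ≥ 1. -/

import Mathlib

private lemma tm9 (a : ℕ) : 9 * (∑ i ∈ Finset.range a, 10 ^ i) + 1 = 10 ^ a := by
  induction a with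
  | zero => simp
  | succ b ih => rw [Finset.sum_range_succ, pow_succ]; omega

private lemma tmsplit (j b : ℕ) :
    (∑ i ∈ Finset.range (j + b), (10:ℕ) ^ i) =
    (∑ i ∈ Finset.range j, (10:ℕ) ^ i) + 10 ^ j * ∑ i ∈ Finset.range b, (10:ℕ) ^ i := by
  induction b with
  | zero => simp
  | succ b ih =>
    rw [← Nat.add_assoc, Finset.sum_range_succ, Finset.sum_range_succ, ih, pow_add]
    ring

private lemma tm_ge (j : ℕ) : j ≤ ∑ i ∈ Finset.range j, 10 ^ i := by
  induction j with
  | zero => simp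
  | succ b ih =>
    rw [Finset.sum_range_succ]
    have : 1 ≤ (10:ℕ) ^ b := Nat.one_le_pow _ _ (by norm_num)
    omega

/-- Fact 1: with `S = ⋃_{j,l≥1} (l·10^j − j, l·10^j + j)`, if `10^{n−1} < k ≤ 10^n`
and `m = l·10^k ± Σ_{j=0}^n 10^j`, then either `m ∉ S` or `m` lies in an interval
`(l₀·10^{j₀} − j₀, l₀·10^{j₀} + j₀)` with `j₀ > k`. -/
theorem fact_one (S : Set ℕ)
    (hS : S = {m : ℕ | ∃ j ≥ 1, ∃ l ≥ 1, l * 10 ^ j < m + j ∧ m < l * 10 ^ j + j})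
    (k l n : ℕ) (hk : 1 ≤ k) (hl : 1 ≤ l)
    (hn1 : n = 0 ∨ 10 ^ (n - 1) < k) (hn2 : k ≤ 10 ^ n)
    (m : ℕ)
    (hm : m = l * 10 ^ k + ∑ j ∈ Finset.range (n + 1), 10 ^ j ∨
          m + ∑ j ∈ Finset.range (n + 1), 10 ^ j = l * 10 ^ k) :
    m ∉ S ∨ ∃ j₀ > k, ∃ l₀ ≥ 1, l₀ * 10 ^ j₀ < m + j₀ ∧ m < l₀ * 10 ^ j₀ + j₀ := by
  by_cases hmem : m ∈ S
  · subst hS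
    obtain ⟨j, hj1, l₁, hl1, h1, h2⟩ := hmem
    rcases lt_or_ge k j with hkj | hjk
    · exact Or.inr ⟨j, hkj, l₁, hl1, h1, h2⟩
    exfalso
    set T := ∑ i ∈ Finset.range (n + 1), (10:ℕ) ^ i with hTdef
    set a := min j (n + 1) with hadef
    set A := ∑ i ∈ Finset.range a, (10:ℕ) ^ i with hAdef
    have ha1 : 1 ≤ a := le_min hj1 (Nat.succ_le_succ (Nat.zero_le n))
    have haj : a ≤ j := min_le_left _ _
    -- k ≥ n + 1
    have hkn : n + 1 ≤ k := by
      rcases hn1 with h0 | h0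
      · omega
      · have hx : n - 1 < 10 ^ (n - 1) := Nat.lt_pow_self (by norm_num)
        omega
    -- A ≤ Tm j
    have hATj : A ≤ ∑ i ∈ Finset.range j, (10:ℕ) ^ i := by
      have := tmsplit a (j - a)
      rw [Nat.add_sub_cancel' haj] at this
      omega
    -- j ≤ A
    have hbj : j ≤ A := by
      rcases le_or_gt j (n + 1) with h | h
      · have : a = j := min_eq_left h
        rw [hAdef, this]; exact tm_ge j
      · have haeq : a = n + 1 := min_eq_right h.le
        have h10 : 10 ^ n ≤ A := by
          rw [hAdef, haeq, Finset.sum_range_succ]; omega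
        omega
    -- A + j ≤ 10 ^ j
    have hb2 : A + j ≤ 10 ^ j := by
      have h9 := tm9 j
      have hj := tm_ge j
      omega
    -- T = 10^j * c + A
    obtain ⟨c, hc⟩ : ∃ c, T = 10 ^ j * c + A := by
      rcases le_or_gt j (n + 1) with h | h
      · refine ⟨∑ i ∈ Finset.range (n + 1 - j), (10:ℕ) ^ i, ?_⟩
        have haeq : a = j := min_eq_left h
        have := tmsplit j (n + 1 - j)
        rw [Nat.add_sub_cancel' h] at this
        rw [hTdef, this, hAdef, haeq]; ring
      · refine ⟨0, ?_⟩
        have haeq : a = n + 1 := min_eq_right h.le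
        rw [hTdef, hAdef, haeq]; ring
    have hpow : (10:ℕ) ^ k = 10 ^ j * 10 ^ (k - j) := by
      rw [← pow_add]; congr 1; omega
    have hP1 : 1 ≤ (10:ℕ) ^ j := Nat.one_le_pow _ _ (by norm_num)
    rcases hm with hm | hm
    · -- addition case: m = 10^j * D + A
      set D := l * 10 ^ (k - j) + c with hDdef
      have hmD : m = 10 ^ j * D + A := by
        rw [hm, hc, hpow, hDdef]; ring
      have hDl : D < l₁ := by
        have hlt : 10 ^ j * D < 10 ^ j * l₁ := by linarith [h2, hbj, hmD]
        exact Nat.lt_of_mul_lt_mul_left hlt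
      have hmul : 10 ^ j * (D + 1) ≤ 10 ^ j * l₁ := Nat.mul_le_mul_left _ hDl
      rw [Nat.mul_add, Nat.mul_one] at hmul
      linarith [h1, hb2, hmD, hmul]
    · -- subtraction case
      set L := l * 10 ^ (k - j) with hLdef
      have heq : m + A + 10 ^ j * c = 10 ^ j * L := by
        have : m + T = 10 ^ j * L := by rw [hm, hpow, hLdef]; ring
        rw [hc] at this; linarith
      have hcL : c < L := by
        have hlt : 10 ^ j * c < 10 ^ j * L := by linarith [heq, hbj, hj1]
        exact Nat.lt_of_mul_lt_mul_left hlt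
      obtain ⟨E, hEeq⟩ : ∃ E, m + A = 10 ^ j * E := by
        refine ⟨L - c, ?_⟩
        have hsum : 10 ^ j * c + 10 ^ j * (L - c) = 10 ^ j * L := by
          rw [← Nat.mul_add, Nat.add_sub_cancel' hcL.le]
        linarith
      have hlE : l₁ < E := by
        have hlt : 10 ^ j * l₁ < 10 ^ j * E := by linarith [h1, hbj, hEeq]
        exact Nat.lt_of_mul_lt_mul_left hlt
      have hmul : 10 ^ j * (l₁ + 1) ≤ 10 ^ j * E := Nat.mul_le_mul_left _ hlE
      rw [Nat.mul_add, Nat.mul_one] at hmul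
      linarith [h2, hb2, hEeq, hmul]
  · exact Or.inl hmem
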